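/- Let F : D ⊆ H → H be L-Lipschitz continuous on D, B : H →ᵐ H maximal monotone with Dom B ⊆ C ⊆ D for nonempty closed convex C, and let σ ∈ (0,1), λ = σ/L. Given z̃, w̃ ∈ H, set z̄ = P_C(z̃), x = (λB + I)⁻¹(z̃ + λw̃ - λF(z̄)), and y = (z̃ + λw̃ - x)/λ + F(x) - F(z̄). Then y ∈ (F + B)(x) and ‖λy + x - (z̃ + λw̃)‖ ≤ σ‖z̃ - x‖. -/

import Mathlib

open Filter InnerProductSpace Pointwise

/-- The ε-enlargement of a set-valued map `T` on a real Hilbert space: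
`u ∈ enl T ε x` iff `⟪x - y, u - v⟫ ≥ -ε` for all `(y, v)` in the graph of `T`. -/
def enl {H : Type*} [NormedAddCommGroup H] [InnerProductSpace ℝ H]
    (T : H → Set H) (ε : ℝ) (x : H) : Set H :=
  {u | ∀ y v, v ∈ T y → -ε ≤ ⟪x - y, u - v⟫_ℝ}

/-- A set-valued map is monotone. -/
def MonotoneOp {H : Type*} [NormedAddCommGroup H] [InnerProductSpace ℝ H]
    (T : H → Set H) : Prop :=
  ∀ x y u v, u ∈ T x → v ∈ T y → 0 ≤ ⟪x - y, u - v⟫_ℝ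

/-- A set-valued map is maximal monotone: it is monotone and its graph is not properly
contained in the graph of any monotone operator. -/
def MaxMonotoneOp {H : Type*} [NormedAddCommGroup H] [InnerProductSpace ℝ H]
    (T : H → Set H) : Prop :=
  MonotoneOp T ∧ ∀ S : H → Set H, MonotoneOp S → (∀ x, T x ⊆ S x) → ∀ x, S x = T x
theorem tseng_step_relative_error {H : Type*} [NormedAddCommGroup H]
    [InnerProductSpace ℝ H] [CompleteSpace H]
    (D : Set H) (F : H → H) (L : ℝ) (hL : 0 < L)
    (hFlip : ∀ x ∈ D, ∀ y ∈ D, ‖F x - F y‖ ≤ L * ‖x - y‖)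
    (B : H → Set H) (hB : MaxMonotoneOp B)
    (C : Set H) (hCne : C.Nonempty) (hCclosed : IsClosed C) (hCconv : Convex ℝ C)
    (hDomBC : {x : H | (B x).Nonempty} ⊆ C) (hCD : C ⊆ D)
    (σ : ℝ) (hσ0 : 0 < σ) (hσ1 : σ < 1) (lam : ℝ) (hlam : lam = σ / L)
    (ztilde wtilde : H)
    (zbar : H) (hzbar : zbar ∈ C ∧ ∀ c ∈ C, ‖ztilde - zbar‖ ≤ ‖ztilde - c‖)
    (x bx : H) (hbx : bx ∈ B x)
    (hres : x + lam • bx = ztilde + lam • wtilde - lam • F zbar)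
    (y : H) (hy : y = lam⁻¹ • (ztilde + lam • wtilde - x) + F x - F zbar) :
    y ∈ ({F x} : Set H) + B x ∧
      ‖lam • y + x - (ztilde + lam • wtilde)‖ ≤ σ * ‖ztilde - x‖ := by
  have hlamne : lam ≠ 0 := by rw [hlam]; positivity
  have hlampos : 0 < lam := by rw [hlam]; positivity
  have hxC : x ∈ C := hDomBC ⟨bx, hbx⟩
  have h1 : ztilde + lam • wtilde - x = lam • bx + lam • F zbar := by
    have : x + lam • bx + lam • F zbar = ztilde + lam • wtilde := by
      rw [hres]; abel
    rw [← this]; abel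
  have hy' : y = F x + bx := by
    rw [hy, h1, smul_add, inv_smul_smul₀ hlamne, inv_smul_smul₀ hlamne]; abel
  refine ⟨by rw [hy']; exact Set.add_mem_add rfl hbx, ?_⟩
  have h2 : lam • y + x - (ztilde + lam • wtilde) = lam • (F x - F zbar) := by
    rw [hy, smul_sub, smul_add, smul_inv_smul₀ hlamne, smul_sub]
    abel
  have hinf : ‖ztilde - zbar‖ = ⨅ w : C, ‖ztilde - w‖ := by
    haveI : Nonempty C := ⟨⟨zbar, hzbar.1⟩⟩
    refine le_antisymm (le_ciInf fun w => hzbar.2 w w.2)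
      (ciInf_le (⟨0, fun _ ⟨_, h⟩ => h ▸ norm_nonneg _⟩ : BddBelow (Set.range fun w : C => ‖ztilde - w‖)) ⟨zbar, hzbar.1⟩)
  have hinner : ⟪ztilde - zbar, x - zbar⟫_ℝ ≤ 0 :=
    (norm_eq_iInf_iff_real_inner_le_zero hCconv hzbar.1).1 hinf x hxC
  have hle : ‖x - zbar‖ ≤ ‖ztilde - x‖ := by
    have hsq : ‖x - zbar‖ ^ 2 ≤ ‖ztilde - x‖ ^ 2 := by
      have hexp : ‖ztilde - x‖ ^ 2 =
          ‖ztilde - zbar‖ ^ 2 - 2 * ⟪ztilde - zbar, x - zbar⟫_ℝ + ‖x - zbar‖ ^ 2 := by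
        have := norm_sub_sq_real (ztilde - zbar) (x - zbar)
        have h3 : ztilde - zbar - (x - zbar) = ztilde - x := by abel
        rw [h3] at this; linarith
      nlinarith [sq_nonneg ‖ztilde - zbar‖]
    exact (pow_le_pow_iff_left₀ (norm_nonneg _) (norm_nonneg _) two_ne_zero).1 hsq
  have hnorm : ‖lam • (F x - F zbar)‖ = lam * ‖F x - F zbar‖ := by
    rw [norm_smul, Real.norm_eq_abs, abs_of_pos hlampos]
  rw [h2, hnorm]
  have hF : ‖F x - F zbar‖ ≤ L * ‖x - zbar‖ := hFlip x (hCD hxC) zbar (hCD hzbar.1)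
  calc lam * ‖F x - F zbar‖ ≤ lam * (L * ‖x - zbar‖) := by
        exact mul_le_mul_of_nonneg_left hF hlampos.le
    _ = σ * ‖x - zbar‖ := by rw [hlam]; field_simp
    _ ≤ σ * ‖ztilde - x‖ := mul_le_mul_of_nonneg_left hle hσ0.le
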